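/- Let n ≡ 2 (mod 4) with n > 1, and let T ∈ SU(n) be reversible with no eigenvalue equal to 1 or −1. Then T can be written as T = J₂J₁ where J₁, J₂ ∈ U(n) are involutions (J₁² = 1 = J₂²) each of determinant −1. -/

import Mathlib

open Matrix
set_option maxHeartbeats 1000000

open Polynomial in
lemma aux_charpoly_conj {n : ℕ} (g M h : Matrix (Fin n) (Fin n) ℂ)
    (h1 : g * h = 1) : (g * M * h).charpoly = M.charpoly := by
  set g' := (C : ℂ →+* ℂ[X]).mapMatrix g with hg'
  set h' := (C : ℂ →+* ℂ[X]).mapMatrix h with hh'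
  have hgh : g' * h' = 1 := by rw [hg', hh', ← _root_.map_mul, h1, _root_.map_one]
  have hs : ∀ P : Matrix (Fin n) (Fin n) ℂ[X],
      Matrix.scalar (Fin n) (X : ℂ[X]) * P = P * Matrix.scalar (Fin n) (X : ℂ[X]) :=
    fun P => (Matrix.scalar_commute (X : ℂ[X]) (fun r => Commute.all _ _) P)
  have hmap : (g * M * h).charmatrix = g' * M.charmatrix * h' := by
    unfold Matrix.charmatrix
    rw [_root_.map_mul, _root_.map_mul, mul_sub, sub_mul]
    congr 1
    · rw [← hs g', mul_assoc, hgh, mul_one]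
  rw [Matrix.charpoly, hmap, Matrix.det_mul, Matrix.det_mul, Matrix.charpoly]
  have hd : g'.det * h'.det = 1 := by
    rw [← Matrix.det_mul, hgh, Matrix.det_one]
  calc g'.det * M.charmatrix.det * h'.det
      = M.charmatrix.det * (g'.det * h'.det) := by ring
    _ = M.charmatrix.det := by rw [hd, mul_one]

open Polynomial in
lemma aux_charpoly_diagonal {n : ℕ} (d : Fin n → ℂ) :
    (Matrix.diagonal d).charpoly = ∏ i, (X - C (d i)) := by
  have : (Matrix.diagonal d).charmatrix = Matrix.diagonal (fun i => X - C (d i)) := by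
    refine Matrix.ext fun i j => ?_
    by_cases hij : i = j
    · subst hij; simp [Matrix.charmatrix_apply_eq]
    · rw [Matrix.charmatrix_apply_ne _ _ _ hij, Matrix.diagonal_apply_ne _ hij,
        Matrix.diagonal_apply_ne _ hij, map_zero, neg_zero]
  rw [Matrix.charpoly, this, Matrix.det_diagonal]


lemma aux_pairing {n : ℕ} (d : Fin n → ℂ) (hd : ∀ i, star (d i) ≠ d i) (s : Finset (Fin n)) :
    (s.1.map d).map star = s.1.map d →
    ∃ (σ : Equiv.Perm (Fin n)) (k : ℕ), σ * σ = 1 ∧ (∀ i, i ∉ s → σ i = i) ∧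
      (∀ i ∈ s, d (σ i) = star (d i)) ∧ s.card = 2 * k ∧ Equiv.Perm.sign σ = (-1) ^ k := by
  classical
  induction s using Finset.strongInductionOn with
  | _ s ih =>
    intro hs
    rcases s.eq_empty_or_nonempty with rfl | ⟨i, hi⟩
    · exact ⟨1, 0, by simp, fun i _ => rfl, fun i hi => absurd hi (by simp), by simp, by simp⟩
    · have hmem : star (d i) ∈ s.1.map d := by
        rw [← hs]
        exact Multiset.mem_map_of_mem _ (Multiset.mem_map_of_mem d hi)
      obtain ⟨j, hj, hdj⟩ := Multiset.mem_map.mp hmem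
      have hj' : j ∈ s := hj
      have hij : i ≠ j := by
        rintro rfl
        exact hd i hdj.symm
      -- t = s minus {i, j}
      set t := (s.erase i).erase j with ht
      have hjt : j ∈ s.erase i := Finset.mem_erase.mpr ⟨fun h => hij h.symm, hj'⟩
      have hsval : s.1 = i ::ₘ j ::ₘ t.1 := by
        have hjv : j ∈ s.1.erase i := by rw [← Finset.erase_val]; exact_mod_cast hjt
        rw [ht, Finset.erase_val, Finset.erase_val, Multiset.cons_erase hjv,
          Multiset.cons_erase (show i ∈ s.1 from hi)]
      have hit : i ∉ t := by simp [ht]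
      have hjt2 : j ∉ t := by simp [ht]
      have htsub : t ⊂ s := by
        refine Finset.ssubset_iff_of_subset ?_ |>.mpr ⟨i, hi, hit⟩
        intro x hx
        exact Finset.mem_of_mem_erase (Finset.mem_of_mem_erase hx)
      have hts : (t.1.map d).map star = t.1.map d := by
        have h2 := hs
        rw [hsval] at h2
        simp only [Multiset.map_cons] at h2
        rw [hdj] at h2
        rw [show star (star (d i)) = d i from star_star _] at h2
        -- h2 : d j ::ₘ d i ::ₘ (map star (map d t.1)) = d i ::ₘ d j ::ₘ map d t.1
        rw [Multiset.cons_swap] at h2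
        exact (Multiset.cons_inj_right _).mp ((Multiset.cons_inj_right _).mp h2)
      obtain ⟨σ', k', hσ'2, hfix, hpair, hcard, hsign⟩ := ih t htsub hts
      have hinv : ∀ x, σ' (σ' x) = x := by
        intro x
        have := congrArg (fun τ => τ x) hσ'2
        simpa [Equiv.Perm.mul_apply] using this
      have hmemt : ∀ x ∈ t, σ' x ∈ t := by
        intro x hx
        by_contra hxt
        have h1 : σ' (σ' x) = σ' x := hfix _ hxt
        rw [hinv] at h1
        exact hxt (h1 ▸ hx)
      set w := Equiv.swap i j with hw
      have hcomm : ∀ y, σ' (w y) = w (σ' y) := by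
        intro y
        by_cases hyi : y = i
        · subst hyi
          rw [hw]
          simp [Equiv.swap_apply_left, hfix _ hit, hfix _ hjt2]
        by_cases hyj : y = j
        · subst hyj
          rw [hw]
          simp [Equiv.swap_apply_right, hfix _ hit, hfix _ hjt2]
        · have hwy : w y = y := Equiv.swap_apply_of_ne_of_ne hyi hyj
          rw [hwy]
          by_cases hyt : y ∈ t
          · have h1 : σ' y ∈ t := hmemt _ hyt
            have : w (σ' y) = σ' y := Equiv.swap_apply_of_ne_of_ne
              (fun h => hit (h ▸ h1)) (fun h => hjt2 (h ▸ h1))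
            rw [this]
          · rw [hfix _ hyt]
            exact (Equiv.swap_apply_of_ne_of_ne hyi hyj).symm
      refine ⟨σ' * w, k' + 1, ?_, ?_, ?_, ?_, ?_⟩
      · ext x
        simp only [Equiv.Perm.mul_apply, Equiv.Perm.one_apply]
        rw [← hcomm (w x), hinv]
        simp [hw, Equiv.swap_apply_self]
      · intro x hx
        have hxi : x ≠ i := fun h => hx (h ▸ hi)
        have hxj : x ≠ j := fun h => hx (h ▸ hj')
        have hxt : x ∉ t := fun h => hx (htsub.1 h)
        simp only [Equiv.Perm.mul_apply, hw]
        rw [Equiv.swap_apply_of_ne_of_ne hxi hxj, hfix _ hxt]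
      · intro x hx
        by_cases hxi : x = i
        · subst hxi
          simp only [Equiv.Perm.mul_apply, hw]
          rw [Equiv.swap_apply_left, hfix _ hjt2, hdj]
        by_cases hxj : x = j
        · subst hxj
          simp only [Equiv.Perm.mul_apply, hw]
          rw [Equiv.swap_apply_right, hfix _ hit, hdj, star_star]
        · have hxt : x ∈ t := by
            rw [ht]
            exact Finset.mem_erase.mpr ⟨hxj, Finset.mem_erase.mpr ⟨hxi, hx⟩⟩
          simp only [Equiv.Perm.mul_apply, hw]
          rw [Equiv.swap_apply_of_ne_of_ne hxi hxj]
          exact hpair _ hxt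
      · have h1 : (s.erase i).card = s.card - 1 := Finset.card_erase_of_mem hi
        have h2 : t.card = (s.erase i).card - 1 := Finset.card_erase_of_mem hjt
        have h3 : 1 ≤ (s.erase i).card := Finset.card_pos.mpr ⟨j, hjt⟩
        have h4 : 1 ≤ s.card := Finset.card_pos.mpr ⟨i, hi⟩
        omega
      · rw [Equiv.Perm.sign_mul, hsign, hw, Equiv.Perm.sign_swap hij, pow_succ]



/-- If `n ≡ 2 (mod 4)`, `n > 1`, and `T ∈ SU(n)` is reversible with no eigenvalue
`1` or `-1`, then `T = J₂ * J₁` for involutions `J₁, J₂ ∈ U(n)` of determinant `-1`. -/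
theorem reversible_su_no_pm_one_eigenvalue_product_two_involutions
    (n : ℕ) (hn : 1 < n) (hmod : n % 4 = 2)
    (T : Matrix (Fin n) (Fin n) ℂ)
    (hT : T ∈ Matrix.specialUnitaryGroup (Fin n) ℂ)
    (hrev : ∃ g : Matrix (Fin n) (Fin n) ℂ,
      g ∈ Matrix.unitaryGroup (Fin n) ℂ ∧ g * T * g⁻¹ = T⁻¹)
    (heig : ¬ ∃ v : Fin n → ℂ, v ≠ 0 ∧ (T.mulVec v = v ∨ T.mulVec v = -v)) :
    ∃ J₁ J₂ : Matrix (Fin n) (Fin n) ℂ,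
      J₁ ∈ Matrix.unitaryGroup (Fin n) ℂ ∧
      J₂ ∈ Matrix.unitaryGroup (Fin n) ℂ ∧
      J₁ * J₁ = 1 ∧ J₂ * J₂ = 1 ∧
      J₁.det = -1 ∧ J₂.det = -1 ∧
      T = J₂ * J₁ := by
  classical
  obtain ⟨hTmem, hTdet⟩ := Matrix.mem_specialUnitaryGroup_iff.mp hT
  have h1 : Tᴴ * T = 1 := by
    rw [← Matrix.star_eq_conjTranspose]; exact (Unitary.mem_iff.mp hTmem).1
  have h2 : T * Tᴴ = 1 := by
    rw [← Matrix.star_eq_conjTranspose]; exact (Unitary.mem_iff.mp hTmem).2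
  set A := T + Tᴴ with hA
  set B := (-Complex.I) • (T - Tᴴ) with hB
  have hAh : A.IsHermitian := by
    unfold Matrix.IsHermitian
    rw [hA, Matrix.conjTranspose_add, Matrix.conjTranspose_conjTranspose, add_comm]
  have hBh : B.IsHermitian := by
    unfold Matrix.IsHermitian
    rw [hB, Matrix.conjTranspose_smul, Matrix.conjTranspose_sub,
      Matrix.conjTranspose_conjTranspose]
    rw [show star (-Complex.I) = Complex.I by simp]
    ext i j
    simp [Matrix.smul_apply, Matrix.sub_apply]
    ring
  have hABc : A * B = B * A := by
    rw [hA, hB, Matrix.mul_smul, Matrix.smul_mul]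
    congr 1
    simp only [add_mul, mul_add, sub_mul, mul_sub, h1, h2]
    abel
  have hAs := (Matrix.isHermitian_iff_isSymmetric).mp hAh
  have hBs := (Matrix.isHermitian_iff_isSymmetric).mp hBh
  have hABl : Commute (Matrix.toEuclideanLin A) (Matrix.toEuclideanLin B) := by
    unfold Commute SemiconjBy
    ext x
    simp only [Module.End.mul_apply, Matrix.toEuclideanLin_apply, Equiv.apply_symm_apply,
      Matrix.mulVec_mulVec]
    rw [hABc]
  have hV := LinearMap.IsSymmetric.directSum_isInternal_of_commute hAs hBs hABl
  have hV' := LinearMap.IsSymmetric.orthogonalFamily_eigenspace_inf_eigenspace hAs hBs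
  set V : ℂ × ℂ → Submodule ℂ (EuclideanSpace ℂ (Fin n)) := fun i =>
    Module.End.eigenspace (Matrix.toEuclideanLin A) i.2
      ⊓ Module.End.eigenspace (Matrix.toEuclideanLin B) i.1 with hVdef
  have hfin : Set.Finite {i : ℂ × ℂ | V i ≠ ⊥} :=
    Submodule.finite_ne_bot_of_iSupIndep hV.submodule_iSupIndep
  have : Fintype {i : ℂ × ℂ // V i ≠ ⊥} := hfin.fintype
  have hV2' := hV'.comp
    (f := (Subtype.val : {i : ℂ × ℂ // V i ≠ ⊥} → ℂ × ℂ)) Subtype.val_injective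
  have hV2 : DirectSum.IsInternal (fun i : {i : ℂ × ℂ // V i ≠ ⊥} => V i.1) := by
    rw [hV2'.isInternal_iff]
    rw [Submodule.orthogonal_eq_bot_iff]
    have htop : ⨆ i, V i = ⊤ := hV.submodule_iSup_eq_top
    rw [← htop]
    apply le_antisymm
    · exact iSup_le fun i => le_iSup V i.1
    · refine iSup_le fun i => ?_
      by_cases hbot : V i = ⊥
      · rw [hbot]; exact bot_le
      · exact le_iSup (fun i : {i : ℂ × ℂ // V i ≠ ⊥} => V i.1) ⟨i, hbot⟩
  have hrank : Module.finrank ℂ (EuclideanSpace ℂ (Fin n)) = n := finrank_euclideanSpace_fin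
  set b := hV2.subordinateOrthonormalBasis hrank hV2' with hb
  set idx := fun a => (hV2.subordinateOrthonormalBasisIndex hrank a hV2' : {i : ℂ × ℂ // V i ≠ ⊥}).1 with hidx
  set d : Fin n → ℂ := fun a => 2⁻¹ * ((idx a).2 + Complex.I * (idx a).1) with hd
  set v : Fin n → (Fin n → ℂ) := fun a => WithLp.equiv 2 (Fin n → ℂ) (b a) with hv
  have hvA : ∀ a, A.mulVec (v a) = (idx a).2 • v a := by
    intro a
    have hba := hV2.subordinateOrthonormalBasis_subordinate hrank a hV2'
    have hmem := (Submodule.mem_inf.mp hba).1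
    rw [Module.End.mem_eigenspace_iff] at hmem
    have := congrArg (WithLp.equiv 2 (Fin n → ℂ)) hmem
    simp only [WithLp.equiv_apply, Matrix.ofLp_toEuclideanLin_apply] at this
    simpa [hv, hidx] using this
  have hvB : ∀ a, B.mulVec (v a) = (idx a).1 • v a := by
    intro a
    have hba := hV2.subordinateOrthonormalBasis_subordinate hrank a hV2'
    have hmem := (Submodule.mem_inf.mp hba).2
    rw [Module.End.mem_eigenspace_iff] at hmem
    have := congrArg (WithLp.equiv 2 (Fin n → ℂ)) hmem
    simp only [WithLp.equiv_apply, Matrix.ofLp_toEuclideanLin_apply] at this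
    simpa [hv, hidx] using this
  have hvT : ∀ a, T.mulVec (v a) = d a • v a := by
    intro a
    have hTAB : T = (2⁻¹ : ℂ) • A + (2⁻¹ * Complex.I) • B := by
      rw [hA, hB]
      ext i j
      simp [Matrix.smul_apply, Matrix.add_apply, Matrix.sub_apply]
      ring_nf
      simp [Complex.I_sq]
      ring
    rw [hTAB, Matrix.add_mulVec, Matrix.smul_mulVec, Matrix.smul_mulVec,
      hvA, hvB, hd]
    ext i
    simp [Pi.smul_apply, smul_eq_mul]
    ring
  -- The unitary change of basis U and diagonal D
  set U : Matrix (Fin n) (Fin n) ℂ := Matrix.of (fun i a => v a i) with hU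
  set D := Matrix.diagonal d with hD
  have hUU : Uᴴ * U = 1 := by
    refine Matrix.ext fun a c => ?_
    have horth := orthonormal_iff_ite.mp b.orthonormal a c
    rw [PiLp.inner_apply] at horth
    simp only [RCLike.inner_apply] at horth
    rw [Matrix.mul_apply, Matrix.one_apply]
    simp only [Matrix.conjTranspose_apply, hU, Matrix.of_apply]
    rw [← horth]
    apply Finset.sum_congr rfl
    intro k _
    rw [hv]
    simp [WithLp.equiv_apply, RCLike.star_def, mul_comm]
  have hUmem : U ∈ Matrix.unitaryGroup (Fin n) ℂ := by
    rw [Matrix.mem_unitaryGroup_iff', Matrix.star_eq_conjTranspose]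
    exact hUU
  have hUU2 : U * Uᴴ = 1 := by
    have := Matrix.mem_unitaryGroup_iff.mp hUmem
    rwa [Matrix.star_eq_conjTranspose] at this
  have hTU : T * U = U * D := by
    refine Matrix.ext fun i a => ?_
    have hva := congrFun (hvT a) i
    rw [Matrix.mulVec, dotProduct] at hva
    rw [hD, Matrix.mul_diagonal, Matrix.mul_apply]
    simp only [hU, Matrix.of_apply]
    rw [hva]
    simp [mul_comm]
  have hTUD : T = U * D * Uᴴ := by
    have h3 : T * (U * Uᴴ) = U * D * Uᴴ := by
      rw [← Matrix.mul_assoc, hTU]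
    rwa [hUU2, mul_one] at h3
  have hDmem : D ∈ Matrix.unitaryGroup (Fin n) ℂ := by
    have h3 : D = Uᴴ * T * U := by
      rw [hTUD, show Uᴴ * (U * D * Uᴴ) * U = (Uᴴ * U) * D * (Uᴴ * U) by noncomm_ring,
        hUU, one_mul, mul_one]
    rw [h3, ← Matrix.star_eq_conjTranspose]
    exact mul_mem (mul_mem (Unitary.star_mem hUmem) hTmem) hUmem
  have hdd : ∀ a, star (d a) * d a = 1 := by
    intro a
    have h3 := Matrix.mem_unitaryGroup_iff'.mp hDmem
    rw [Matrix.star_eq_conjTranspose, hD, Matrix.diagonal_conjTranspose,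
      Matrix.diagonal_mul_diagonal] at h3
    have h4 := Matrix.ext_iff.mpr h3 a a
    simpa [Matrix.one_apply] using h4
  have hv0 : ∀ a, v a ≠ 0 := by
    intro a h
    apply b.orthonormal.ne_zero a
    ext i
    have := congrFun h i
    rw [hv] at this
    simpa [WithLp.equiv_apply] using this
  have hd1 : ∀ a, d a ≠ 1 ∧ d a ≠ -1 := by
    intro a
    constructor <;> intro h <;> apply heig
    · exact ⟨v a, hv0 a, Or.inl (by rw [hvT a, h, one_smul])⟩
    · refine ⟨v a, hv0 a, Or.inr ?_⟩
      rw [hvT a, h]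
      ext i
      simp
  have hdstar : ∀ a, star (d a) ≠ d a := by
    intro a h
    have h2 := hdd a
    rw [h] at h2
    rcases mul_self_eq_one_iff.mp h2 with h3 | h3
    exacts [(hd1 a).1 h3, (hd1 a).2 h3]
  -- inverse of T
  have hDc : D * Matrix.diagonal (fun a => star (d a)) = 1 := by
    rw [hD, Matrix.diagonal_mul_diagonal,
      show (fun a => d a * star (d a)) = fun _ => (1 : ℂ) from
        funext fun a => by rw [mul_comm]; exact hdd a,
      Matrix.diagonal_one]
  set T' := U * Matrix.diagonal (fun a => star (d a)) * Uᴴ with hT'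
  have hTT' : T * T' = 1 := by
    rw [hTUD, hT',
      show U * D * Uᴴ * (U * Matrix.diagonal (fun a => star (d a)) * Uᴴ)
        = U * (D * (Uᴴ * U) * Matrix.diagonal (fun a => star (d a))) * Uᴴ by noncomm_ring,
      hUU, mul_one, hDc, mul_one, hUU2]
  have hTinv : T⁻¹ = T' := Matrix.inv_eq_right_inv hTT'
  obtain ⟨g, hgmem, hgrev⟩ := hrev
  have hg1 : g * star g = 1 := (Unitary.mem_iff.mp hgmem).2
  have hginv : g⁻¹ = star g := Matrix.inv_eq_right_inv hg1
  have hcp : T.charpoly = T⁻¹.charpoly := by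
    rw [← hgrev, hginv]
    exact (aux_charpoly_conj g T (star g) hg1).symm
  have hcpd : (Matrix.diagonal d).charpoly
      = (Matrix.diagonal (fun a => star (d a))).charpoly := by
    calc (Matrix.diagonal d).charpoly = T.charpoly := by
          rw [hTUD, hD]
          exact (aux_charpoly_conj U (Matrix.diagonal d) Uᴴ hUU2).symm
      _ = T⁻¹.charpoly := hcp
      _ = _ := by
          rw [hTinv, hT']
          exact aux_charpoly_conj U (Matrix.diagonal (fun a => star (d a))) Uᴴ hUU2
  have hroots : (Finset.univ.val.map d)
      = Finset.univ.val.map (fun a => star (d a)) := by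
    have h1 := aux_charpoly_diagonal d
    have h2 := aux_charpoly_diagonal (fun a => star (d a))
    rw [h1, h2] at hcpd
    have e1 : ∀ e : Fin n → ℂ, (∏ i, (Polynomial.X - Polynomial.C (e i)))
        = ((Finset.univ.val.map e).map (fun z => Polynomial.X - Polynomial.C z)).prod := by
      intro e
      rw [Multiset.map_map]
      rfl
    rw [e1 d, e1 (fun a => star (d a))] at hcpd
    calc Finset.univ.val.map d
        = ((Finset.univ.val.map d).map (fun z => Polynomial.X - Polynomial.C z)).prod.roots :=
          (Polynomial.roots_multiset_prod_X_sub_C _).symm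
      _ = ((Finset.univ.val.map (fun a => star (d a))).map
            (fun z => Polynomial.X - Polynomial.C z)).prod.roots := by rw [hcpd]
      _ = _ := Polynomial.roots_multiset_prod_X_sub_C _
  have hstar : ((Finset.univ.val.map d).map star : Multiset ℂ) = Finset.univ.val.map d := by
    rw [Multiset.map_map]
    exact hroots.symm
  obtain ⟨σ, k, hσ2, _, hpair, hk, hsgn⟩ := aux_pairing d hdstar Finset.univ hstar
  have hkodd : Odd k := by
    rw [Finset.card_univ, Fintype.card_fin] at hk
    rw [Nat.odd_iff]
    omega
  have hsgn' : Equiv.Perm.sign σ = -1 := by rw [hsgn, hkodd.neg_one_pow]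
  set P := σ.permMatrix ℂ with hP
  have hinvσ : ∀ x, σ (σ x) = x := fun x => by
    have h3 := congrArg (fun τ : Equiv.Perm (Fin n) => τ x) hσ2
    simpa [Equiv.Perm.mul_apply] using h3
  have hPapp : ∀ i j, P i j = if σ i = j then (1 : ℂ) else 0 := by
    intro i j
    rw [hP]
    simp [PEquiv.toMatrix_apply, Equiv.toPEquiv_apply, eq_comm]
  have hPsymm : Pᴴ = P := by
    refine Matrix.ext fun i j => ?_
    rw [Matrix.conjTranspose_apply, hPapp, hPapp]
    by_cases h : σ i = j
    · have h4 : σ j = i := by rw [← h, hinvσ]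
      simp [h, h4]
    · have h4 : σ j ≠ i := fun hc => h (by rw [← hc, hinvσ])
      simp [h, h4]
  have hPP : P * P = 1 := by
    have hσtrans : σ.toPEquiv.trans σ.toPEquiv = (Equiv.refl (Fin n)).toPEquiv := by
      have h7 : σ.trans σ = Equiv.refl (Fin n) := Equiv.ext fun x => hinvσ x
      rw [← Equiv.toPEquiv_trans, h7]
    rw [hP]
    unfold Equiv.Perm.permMatrix
    rw [← PEquiv.toMatrix_trans, hσtrans, Equiv.toPEquiv_refl, PEquiv.toMatrix_refl]
  have hPmem : P ∈ Matrix.unitaryGroup (Fin n) ℂ := by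
    rw [Matrix.mem_unitaryGroup_iff', Matrix.star_eq_conjTranspose, hPsymm]
    exact hPP
  have hPdet : P.det = -1 := by
    rw [hP, Matrix.det_permutation, hsgn']
    simp
  have hPDP : P * D * P = Matrix.diagonal (fun a => star (d a)) := by
    rw [hP]
    unfold Equiv.Perm.permMatrix
    rw [PEquiv.toMatrix_toPEquiv_mul, PEquiv.mul_toMatrix_toPEquiv, Matrix.submatrix_submatrix]
    refine Matrix.ext fun i j => ?_
    simp only [Matrix.submatrix_apply, Function.comp_apply, id_eq]
    have hsymm : σ j = σ.symm j := by
      have h5 := hinvσ (σ.symm j)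
      rwa [Equiv.apply_symm_apply] at h5
    by_cases hij : i = j
    · subst hij
      rw [← hsymm, hD, Matrix.diagonal_apply_eq, Matrix.diagonal_apply_eq]
      exact hpair i (Finset.mem_univ i)
    · have h6 : σ i ≠ σ.symm j := by
        rw [← hsymm]
        exact fun hc => hij (σ.injective hc)
      rw [hD, Matrix.diagonal_apply_ne _ h6, Matrix.diagonal_apply_ne _ hij]
  -- assemble
  set J₁ := U * P * Uᴴ with hJ1
  have hJ1mem : J₁ ∈ Matrix.unitaryGroup (Fin n) ℂ := by
    rw [hJ1, ← Matrix.star_eq_conjTranspose]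
    exact mul_mem (mul_mem hUmem hPmem) (Unitary.star_mem hUmem)
  have hJ1sq : J₁ * J₁ = 1 := by
    rw [hJ1, show U * P * Uᴴ * (U * P * Uᴴ) = U * (P * (Uᴴ * U) * P) * Uᴴ by noncomm_ring,
      hUU, mul_one, hPP, mul_one, hUU2]
  have hJTJ : J₁ * T * J₁ = T' := by
    rw [hJ1, hTUD, hT',
      show U * P * Uᴴ * (U * D * Uᴴ) * (U * P * Uᴴ)
        = U * (P * (Uᴴ * U) * D * (Uᴴ * U) * P) * Uᴴ by noncomm_ring,
      hUU, mul_one, mul_one, hPDP]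
  have hdetU : U.det * Uᴴ.det = 1 := by
    rw [← Matrix.det_mul, hUU2, Matrix.det_one]
  have hJ1det : J₁.det = -1 := by
    rw [hJ1, Matrix.det_mul, Matrix.det_mul]
    calc U.det * P.det * Uᴴ.det = P.det * (U.det * Uᴴ.det) := by ring
      _ = -1 := by rw [hdetU, mul_one, hPdet]
  refine ⟨J₁, T * J₁, hJ1mem, mul_mem hTmem hJ1mem, hJ1sq, ?_, hJ1det, ?_, ?_⟩
  · rw [show T * J₁ * (T * J₁) = T * (J₁ * T * J₁) by noncomm_ring, hJTJ, hTT']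
  · rw [Matrix.det_mul, hTdet, one_mul, hJ1det]
  · rw [Matrix.mul_assoc, hJ1sq, mul_one]
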